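/- Markovian network characterization: given an electric network on a finite connected graph with parameters D_{xy} = D_{yx} > 0 and γ_{xy} = 1/γ_{yx} > 0 on edges, there exists an irreducible Markov chain with transitions P and stationary distribution μ satisfying D_{xy} = √(μ_x P_{xy} μ_y P_{yx}) and γ_{xy} = √(μ_x P_{xy}/(μ_y P_{yx})) if and only if Σ_{z∼x} D_{xz}γ_{xz} = Σ_{z∼x} D_{xz}γ_{zx} for every x ∈ V and Σ_{x∈V} Σ_{z∼x} D_{xz}γ_{zx} = 1. In this case μ_x = Σ_{z∼x} D_{xz}γ_{zx} and P_{xy} = D_{xy}γ_{xy}/μ_x. -/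

import Mathlib

open Finset

variable {V : Type*} [Fintype V] [DecidableEq V]

/-- `P, μ` is an irreducible Markov chain on the graph `G` (positive transitions
exactly on edges) whose associated network parameters are `D, γ`. -/
def IsChainFor (G : V → V → Prop) (D γ : V → V → ℝ)
    (P : V → V → ℝ) (μ : V → ℝ) [Fintype V] : Prop :=
  (∀ x y, G x y → 0 < P x y) ∧ (∀ x y, ¬ G x y → P x y = 0) ∧
  (∀ x, ∑ y, P x y = 1) ∧
  (∀ x, 0 < μ x) ∧ (∑ x, μ x = 1) ∧ (∀ y, ∑ x, μ x * P x y = μ y) ∧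
  (∀ x y, G x y → D x y = Real.sqrt (μ x * P x y * (μ y * P y x)) ∧
    γ x y = Real.sqrt (μ x * P x y / (μ y * P y x)))

private lemma chain_basic
    (G : V → V → Prop) [DecidableRel G]
    (hGsym : ∀ x y, G x y → G y x)
    (D γ : V → V → ℝ) (hDsym : ∀ x y, D x y = D y x)
    (P : V → V → ℝ) (μ : V → ℝ) (hc : IsChainFor G D γ P μ) :
    (∀ x y, G x y → D x y * γ x y = μ x * P x y) ∧
    (∀ x, μ x = ∑ z ∈ univ.filter (fun z => G x z), D x z * γ z x) := by
  obtain ⟨hPpos, hPzero, hProw, hμpos, hμsum, hstat, hform⟩ := hc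
  have key : ∀ x y, G x y → D x y * γ x y = μ x * P x y := by
    intro x y hxy
    obtain ⟨hD, hγ⟩ := hform x y hxy
    have ha : 0 < μ x * P x y := mul_pos (hμpos x) (hPpos x y hxy)
    have hb : 0 < μ y * P y x := mul_pos (hμpos y) (hPpos y x (hGsym x y hxy))
    rw [hD, hγ, ← Real.sqrt_mul (by positivity)]
    rw [show μ x * P x y * (μ y * P y x) * (μ x * P x y / (μ y * P y x))
        = (μ x * P x y) ^ 2 by
          rw [← mul_div_assoc, mul_comm (μ x * P x y) (μ y * P y x), mul_assoc,
            mul_div_cancel_left₀ _ hb.ne', sq]]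
    exact Real.sqrt_sq ha.le
  refine ⟨key, fun x => ?_⟩
  have h1 : ∀ z ∈ univ.filter (fun z => G x z), D x z * γ z x = μ z * P z x := by
    intro z hz
    simp only [mem_filter] at hz
    rw [hDsym]
    exact key z x (hGsym x z hz.2)
  rw [Finset.sum_congr rfl h1, ← hstat x]
  symm
  apply Finset.sum_subset (subset_univ _)
  intro z _ hz
  simp only [mem_filter, mem_univ, true_and] at hz
  have : ¬ G z x := fun h => hz (hGsym z x h)
  rw [hPzero z x this, mul_zero]

/-- characterisation of Markovian networks, with the formulas for
`μ` and `P` in the Markovian case. -/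
theorem markovian_characterization
    (G : V → V → Prop) [DecidableRel G]
    (hGsym : ∀ x y, G x y → G y x)
    (hconn : ∀ x y : V, Relation.ReflTransGen G x y)
    (D γ : V → V → ℝ)
    (hDpos : ∀ x y, G x y → 0 < D x y)
    (hDsym : ∀ x y, D x y = D y x)
    (hγpos : ∀ x y, G x y → 0 < γ x y)
    (hγanti : ∀ x y, G x y → γ x y * γ y x = 1)
    (hγloop : ∀ x, G x x → γ x x = 1) :
    ((∃ P μ, IsChainFor G D γ P μ) ↔
      ((∀ x, ∑ z ∈ univ.filter (fun z => G x z), D x z * γ x z =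
          ∑ z ∈ univ.filter (fun z => G x z), D x z * γ z x) ∧
        ∑ x, ∑ z ∈ univ.filter (fun z => G x z), D x z * γ z x = 1)) ∧
    (∀ P μ, IsChainFor G D γ P μ →
      (∀ x, μ x = ∑ z ∈ univ.filter (fun z => G x z), D x z * γ z x) ∧
      (∀ x y, G x y →
        P x y = D x y * γ x y / ∑ z ∈ univ.filter (fun z => G x z), D x z * γ z x)) := by
  constructor
  · constructor
    · rintro ⟨P, μ, hc⟩
      obtain ⟨key, hμeq⟩ := chain_basic G hGsym D γ hDsym P μ hc
      obtain ⟨hPpos, hPzero, hProw, hμpos, hμsum, hstat, hform⟩ := hc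
      constructor
      · intro x
        rw [← hμeq x]
        have h1 : ∑ z ∈ univ.filter (fun z => G x z), D x z * γ x z
            = ∑ z ∈ univ.filter (fun z => G x z), μ x * P x z := by
          refine Finset.sum_congr rfl fun z hz => ?_
          simp only [mem_filter] at hz
          exact key x z hz.2
        have h2 : ∑ z ∈ univ.filter (fun z => G x z), μ x * P x z = ∑ z, μ x * P x z := by
          apply Finset.sum_subset (subset_univ _)
          intro z _ hz
          simp only [mem_filter, mem_univ, true_and] at hz
          rw [hPzero x z hz, mul_zero]
        rw [h1, h2, ← Finset.mul_sum, hProw x, mul_one]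
      · calc ∑ x, ∑ z ∈ univ.filter (fun z => G x z), D x z * γ z x
            = ∑ x, μ x := by exact Finset.sum_congr rfl fun x _ => (hμeq x).symm
          _ = 1 := hμsum
    · rintro ⟨h1, h2⟩
      have hnb : ∀ x : V, ∃ z, G x z := by
        intro x
        by_contra hno
        push_neg at hno
        have hallx : ∀ y : V, y = x := by
          intro y
          rcases (hconn x y).cases_head with h | ⟨c, hc, _⟩
          · exact h.symm
          · exact absurd hc (hno c)
        have huniv : (univ : Finset V) = {x} := by
          ext y; simp [hallx y]
        rw [huniv] at h2
        simp [Finset.filter_singleton, hno x] at h2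
      set S : V → ℝ := fun x => ∑ z ∈ univ.filter (fun z => G x z), D x z * γ z x with hS
      have hSpos : ∀ x, 0 < S x := by
        intro x
        obtain ⟨z, hz⟩ := hnb x
        apply Finset.sum_pos
        · intro i hi
          simp only [mem_filter] at hi
          exact mul_pos (hDpos x i hi.2) (hγpos i x (hGsym x i hi.2))
        · exact ⟨z, by simp [hz]⟩
      set P : V → V → ℝ := fun x y => if G x y then D x y * γ x y / S x else 0 with hP
      have hPval : ∀ x y, G x y → S x * P x y = D x y * γ x y := by
        intro x y hxy
        simp only [hP, if_pos hxy]
        rw [mul_div_cancel₀ _ (hSpos x).ne']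
      refine ⟨P, S, ?_, ?_, ?_, hSpos, h2, ?_, ?_⟩
      · intro x y hxy
        simp only [hP, if_pos hxy]
        exact div_pos (mul_pos (hDpos x y hxy) (hγpos x y hxy)) (hSpos x)
      · intro x y hxy
        simp only [hP, if_neg hxy]
      · intro x
        have : ∑ y, P x y = ∑ y ∈ univ.filter (fun y => G x y), D x y * γ x y / S x := by
          rw [Finset.sum_filter]
        rw [this, ← Finset.sum_div, h1 x]
        exact div_self (hSpos x).ne'
      · intro y
        have e1 : ∀ x : V, S x * P x y = if G x y then D x y * γ x y else 0 := by
          intro x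
          by_cases hxy : G x y
          · rw [if_pos hxy, hPval x y hxy]
          · simp [hP, hxy]
        rw [Finset.sum_congr rfl fun x _ => e1 x, ← Finset.sum_filter]
        have hset : univ.filter (fun x => G x y) = univ.filter (fun z => G y z) := by
          ext z
          simp only [mem_filter, mem_univ, true_and]
          exact ⟨hGsym _ _, hGsym _ _⟩
        rw [hset]
        exact Finset.sum_congr rfl fun z _ => by rw [hDsym]
      · intro x y hxy
        have hyx := hGsym x y hxy
        have ea : S x * P x y = D x y * γ x y := hPval x y hxy
        have eb : S y * P y x = D x y * γ y x := by
          rw [hPval y x hyx, hDsym y x]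
        have hγyx : γ y x = 1 / γ x y := by
          rw [eq_div_iff (hγpos x y hxy).ne', mul_comm]
          exact hγanti x y hxy
        constructor
        · rw [ea, eb, show D x y * γ x y * (D x y * γ y x)
              = D x y ^ 2 * (γ x y * γ y x) by ring, hγanti x y hxy, mul_one]
          exact (Real.sqrt_sq (hDpos x y hxy).le).symm
        · have hD := (hDpos x y hxy).ne'
          have hγ := (hγpos x y hxy).ne'
          rw [ea, eb, hγyx, show D x y * γ x y / (D x y * (1 / γ x y)) = γ x y ^ 2 by
            field_simp]
          exact (Real.sqrt_sq (hγpos x y hxy).le).symm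
  · intro P μ hc
    obtain ⟨key, hμeq⟩ := chain_basic G hGsym D γ hDsym P μ hc
    obtain ⟨hPpos, hPzero, hProw, hμpos, hμsum, hstat, hform⟩ := hc
    refine ⟨hμeq, fun x y hxy => ?_⟩
    rw [← hμeq x, eq_div_iff (hμpos x).ne', mul_comm]
    exact (key x y hxy).symm
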